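/- Let (C, S, W) be a category with a left resolvent functor (R, ε), and D a category with a saturated class of weak equivalences E. Let Cat_{S,E}(C, D) be the full subcategory of functors F : C → D with F(S) ⊆ E, with strong equivalences the natural transformations φ such that φ_X ∈ E for all X, and weak equivalences those φ with φ_M ∈ E for all cofibrant M. Then precomposition with R, with counit Fε : F∘R ⟹ F, is a left resolvent functor on Cat_{S,E}(C, D); hence this functor category is a left Cartan-Eilenberg category; and a functor F in it is cofibrant if and only if F(W) ⊆ E. -/

import Mathlib

open CategoryTheory

universe v u v' u'

section

variable {A : Type*} [Category A]

/-- An object `M` is `(S, W)`-cofibrant: for every `w : Y ⟶ X` in `W`, composition with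
`w` induces a bijection `A[S⁻¹](M, Y) → A[S⁻¹](M, X)`. -/
def Cofibrant (S W : MorphismProperty A) (M : A) : Prop :=
  ∀ ⦃Y X : A⦄ (w : Y ⟶ X), W w →
    Function.Bijective (fun g : S.Q.obj M ⟶ S.Q.obj Y => g ≫ S.Q.map w)

variable (S W : MorphismProperty A)

/-- If a functor inverts `W`, it inverts anything in the saturation of `W`. -/
lemma inverted_of_satW {B : Type*} [Category B] (G : A ⥤ B) (hG : W.IsInvertedBy G)
    {Y X : A} (g : Y ⟶ X) (hg : IsIso (W.Q.map g)) : IsIso (G.map g) := by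
  have fac := Localization.Construction.fac G hG
  have h := (Functor.congr_hom fac.symm g)
  rw [h, Functor.comp_map]
  infer_instance

lemma cof_hom_bij {M : A} (hM : Cofibrant S W M) {Y X : A} (g : Y ⟶ X)
    (hg : IsIso (W.Q.map g)) :
    Function.Bijective (fun h : S.Q.obj M ⟶ S.Q.obj Y => h ≫ S.Q.map g) := by
  let Φ : A ⥤ Type _ := S.Q ⋙ coyoneda.obj (Opposite.op (S.Q.obj M))
  have hΦ : W.IsInvertedBy Φ := by
    intro P Q w hw
    rw [CategoryTheory.isIso_iff_bijective]
    exact hM w hw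
  have := inverted_of_satW W Φ hΦ g hg
  exact (CategoryTheory.isIso_iff_bijective (Φ.map g)).1 this

lemma satW_iso_of_cofibrant {M N : A} (hM : Cofibrant S W M) (hN : Cofibrant S W N)
    (g : M ⟶ N) (hg : IsIso (W.Q.map g)) : IsIso (S.Q.map g) := by
  obtain ⟨h, hh⟩ := (cof_hom_bij S W hN g hg).2 (𝟙 _)
  have hinj := (cof_hom_bij S W hM g hg).1
  simp only at hh
  have : (fun k : S.Q.obj M ⟶ S.Q.obj M => k ≫ S.Q.map g) (S.Q.map g ≫ h) =
      (fun k : S.Q.obj M ⟶ S.Q.obj M => k ≫ S.Q.map g) (𝟙 _) := by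
    simp only [Category.assoc, Category.id_comp, hh, Category.comp_id]
  exact ⟨h, hinj this, hh⟩

lemma bij_of_natTrans {B : Type*} [Category B] (T : B ⥤ B) (η : T ⟶ 𝟭 B)
    {M Y X : B} (ψ : Y ⟶ X) [IsIso (η.app M)] [IsIso (T.map ψ)] :
    Function.Bijective (fun g : M ⟶ Y => g ≫ ψ) := by
  have nat : ∀ {Z Z' : B} (f : Z ⟶ Z'), T.map f ≫ η.app Z' = η.app Z ≫ f := by
    intro Z Z' f
    have := η.naturality f
    simpa using this
  constructor
  · intro a a' h
    simp only at h
    have hT : T.map a = T.map a' := by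
      have : T.map a ≫ T.map ψ = T.map a' ≫ T.map ψ := by
        rw [← T.map_comp, ← T.map_comp, h]
      exact (cancel_mono (T.map ψ)).1 this
    have : η.app M ≫ a = η.app M ≫ a' := by rw [← nat a, ← nat a', hT]
    exact (cancel_epi (η.app M)).1 this
  · intro b
    refine ⟨inv (η.app M) ≫ T.map b ≫ inv (T.map ψ) ≫ η.app Y, ?_⟩
    show (inv (η.app M) ≫ T.map b ≫ inv (T.map ψ) ≫ η.app Y) ≫ ψ = b
    rw [Category.assoc, Category.assoc, Category.assoc, ← nat ψ,
      IsIso.inv_hom_id_assoc, nat b, IsIso.inv_hom_id_assoc]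

lemma isIso_of_bij {B : Type*} [Category B] {P R : B} (e : P ⟶ R)
    (h1 : Function.Surjective (fun g : R ⟶ P => g ≫ e))
    (h2 : Function.Injective (fun g : P ⟶ P => g ≫ e)) : IsIso e := by
  obtain ⟨h, hh⟩ := h1 (𝟙 R)
  simp only at hh
  refine ⟨h, ?_, hh⟩
  apply h2
  simp only [Category.assoc, hh, Category.comp_id, Category.id_comp]

end

variable {C : Type u} [Category.{v} C] {D : Type u'} [Category.{v'} D]

/-- The full subcategory `Cat_{S,E}(C, D)` of functors sending `S` into `E`. -/
def SendsSE (S : MorphismProperty C) (E : MorphismProperty D) : (C ⥤ D) → Prop :=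
  fun F => ∀ ⦃X Y : C⦄ (f : X ⟶ Y), S f → E (F.map f)

/-- Strong equivalences in `Cat_{S,E}(C, D)`: natural transformations `φ` with
`φ_X ∈ E` for every object `X`. -/
def StildeProp (S : MorphismProperty C) (E : MorphismProperty D) :
    MorphismProperty (ObjectProperty.FullSubcategory (SendsSE S E)) :=
  fun _ _ φ => ∀ X : C, E (((ObjectProperty.ι (SendsSE S E)).map φ).app X)

/-- Weak equivalences in `Cat_{S,E}(C, D)`: natural transformations `φ` with
`φ_M ∈ E` for every cofibrant object `M` of `C`. -/
def WtildeProp (S W : MorphismProperty C) (E : MorphismProperty D) :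
    MorphismProperty (ObjectProperty.FullSubcategory (SendsSE S E)) :=
  fun _ _ φ => ∀ M : C, Cofibrant S W M →
    E (((ObjectProperty.ι (SendsSE S E)).map φ).app M)

lemma key_lemma (S W : MorphismProperty C) (E : MorphismProperty D)
    (hE : ∀ ⦃X Y : D⦄ (f : X ⟶ Y), E f ↔ IsIso (E.Q.map f))
    {F : C ⥤ D} (hF : ∀ ⦃X Y : C⦄ (f : X ⟶ Y), S f → E (F.map f))
    {M N : C} (hM : Cofibrant S W M) (hN : Cofibrant S W N)
    (g : M ⟶ N) (hg : IsIso (W.Q.map g)) : E (F.map g) := by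
  have hSiso := satW_iso_of_cofibrant S W hM hN g hg
  have hinv : S.IsInvertedBy (F ⋙ E.Q) := fun _ _ f hf => (hE _).1 (hF f hf)
  have h2 := inverted_of_satW S (F ⋙ E.Q) hinv g hSiso
  exact (hE _).2 h2

/-- If `F(W) ⊆ E` then `F` sends the saturation of `W` into `E`. -/
lemma sendsSatW (W : MorphismProperty C) (E : MorphismProperty D)
    (hE : ∀ ⦃X Y : D⦄ (f : X ⟶ Y), E f ↔ IsIso (E.Q.map f))
    {F : C ⥤ D} (hF : ∀ ⦃X Y : C⦄ (f : X ⟶ Y), W f → E (F.map f))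
    {M N : C} (g : M ⟶ N) (hg : IsIso (W.Q.map g)) : E (F.map g) := by
  have hinv : W.IsInvertedBy (F ⋙ E.Q) := fun _ _ f hf => (hE _).1 (hF f hf)
  exact (hE _).2 (inverted_of_satW W (F ⋙ E.Q) hinv g hg)

/-- Let `(C, S, W)` have a left resolvent functor `(R, ε)` (each `R X` cofibrant, each
`ε_X` in the saturation of `W`), and let `E` be a saturated class of weak equivalences on
`D`.  Then precomposition with `R`, with counit `F ∗ ε`, defines a left resolvent functor
`(R*, ε*)` on `(Cat_{S,E}(C, D), S~, W~)`; hence each `R*(F)` is cofibrant and each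
`ε*_F` lies in the saturation of `W~`, the functor category is a left Cartan-Eilenberg
category (every functor has a cofibrant left model), and a functor `F` in it is cofibrant
if and only if `F(W) ⊆ E`. -/
theorem functor_category_CE
    (S W : MorphismProperty C)
    (comp_S : ∀ ⦃X Y Z : C⦄ (f : X ⟶ Y) (g : Y ⟶ Z), S f → S g → S (f ≫ g))
    (comp_W : ∀ ⦃X Y Z : C⦄ (f : X ⟶ Y) (g : Y ⟶ Z), W f → W g → W (f ≫ g))
    (iso_S : ∀ ⦃X Y : C⦄ (f : X ⟶ Y), IsIso f → S f)
    (iso_W : ∀ ⦃X Y : C⦄ (f : X ⟶ Y), IsIso f → W f)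
    (le_sat : ∀ ⦃X Y : C⦄ (f : X ⟶ Y), S f → IsIso (W.Q.map f))
    (R : C ⥤ C) (ε : R ⟶ 𝟭 C)
    (hcof : ∀ X : C, Cofibrant S W (R.obj X))
    (hε : ∀ X : C, IsIso (W.Q.map (ε.app X)))
    (E : MorphismProperty D)
    (hE : ∀ ⦃X Y : D⦄ (f : X ⟶ Y), E f ↔ IsIso (E.Q.map f)) :
    ∃ (Rstar : ObjectProperty.FullSubcategory (SendsSE S E) ⥤ ObjectProperty.FullSubcategory (SendsSE S E))
      (εstar : Rstar ⟶ 𝟭 (ObjectProperty.FullSubcategory (SendsSE S E)))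
      (fac : Rstar ⋙ ObjectProperty.ι (SendsSE S E) =
        ObjectProperty.ι (SendsSE S E) ⋙ (Functor.whiskeringLeft C C D).obj R),
      (∀ (F : ObjectProperty.FullSubcategory (SendsSE S E)) (X : C),
        ((ObjectProperty.ι (SendsSE S E)).map (εstar.app F)).app X =
          eqToHom (Functor.congr_obj (Functor.congr_obj fac F) X) ≫
            F.obj.map (ε.app X)) ∧
      (∀ F : ObjectProperty.FullSubcategory (SendsSE S E),
        Cofibrant (StildeProp S E) (WtildeProp S W E) (Rstar.obj F)) ∧
      (∀ F : ObjectProperty.FullSubcategory (SendsSE S E),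
        IsIso ((WtildeProp S W E).Q.map (εstar.app F))) ∧
      (∀ F : ObjectProperty.FullSubcategory (SendsSE S E),
        ∃ (M : ObjectProperty.FullSubcategory (SendsSE S E)) (e : M ⟶ F),
          Cofibrant (StildeProp S E) (WtildeProp S W E) M ∧
          IsIso ((WtildeProp S W E).Q.map e)) ∧
      (∀ F : ObjectProperty.FullSubcategory (SendsSE S E),
        Cofibrant (StildeProp S E) (WtildeProp S W E) F ↔
          ∀ ⦃X Y : C⦄ (w : X ⟶ Y), W w → E (F.obj.map w)) := by
  -- maps in the saturation of `W` are preserved by `R`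
  have satW_Rmap : ∀ {X Y : C} (f : X ⟶ Y), IsIso (W.Q.map f) →
      IsIso (W.Q.map (R.map f)) := by
    intro X Y f hf
    have hcomm : R.map f ≫ ε.app Y = ε.app X ≫ f := by
      simpa using ε.naturality f
    have h1 := congrArg W.Q.map hcomm
    rw [W.Q.map_comp, W.Q.map_comp] at h1
    haveI := hε X; haveI := hε Y
    have : W.Q.map (R.map f) =
        (W.Q.map (ε.app X) ≫ W.Q.map f) ≫ inv (W.Q.map (ε.app Y)) := by
      rw [← h1]; simp
    rw [this]
    infer_instance
  have keyE : ∀ (F : ObjectProperty.FullSubcategory (SendsSE S E)) {M N : C} (g : M ⟶ N),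
      Cofibrant S W M → Cofibrant S W N → IsIso (W.Q.map g) → E (F.obj.map g) :=
    fun F _ _ g hM hN hg => key_lemma S W E hE F.property hM hN g hg
  -- the precomposition functor
  have hRobj : ∀ F : ObjectProperty.FullSubcategory (SendsSE S E), SendsSE S E (R ⋙ F.obj) := by
    intro F X Y f hf
    exact keyE F (R.map f) (hcof X) (hcof Y) (satW_Rmap f (le_sat f hf))
  let Rstar : ObjectProperty.FullSubcategory (SendsSE S E) ⥤ ObjectProperty.FullSubcategory (SendsSE S E) :=
    ObjectProperty.lift _
      (ObjectProperty.ι (SendsSE S E) ⋙ (Functor.whiskeringLeft C C D).obj R) hRobj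
  -- the counit
  let εs : ∀ F : ObjectProperty.FullSubcategory (SendsSE S E), (Rstar.obj F ⟶ F) := fun F =>
    ObjectProperty.homMk (show R ⋙ F.obj ⟶ F.obj from
      { app := fun X => F.obj.map (ε.app X)
        naturality := by
          intro X Y f
          dsimp
          rw [← F.obj.map_comp, ← F.obj.map_comp]
          congr 1
          simpa using ε.naturality f })
  let εstar : Rstar ⟶ 𝟭 (ObjectProperty.FullSubcategory (SendsSE S E)) :=
    { app := εs
      naturality := by
        intro F G φ
        exact ObjectProperty.hom_ext _ (NatTrans.ext (funext fun X => (φ.hom.naturality (ε.app X)).symm)) }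
  -- basic membership facts
  have εs_app : ∀ (F : ObjectProperty.FullSubcategory (SendsSE S E)) (X : C),
      ((ObjectProperty.ι (SendsSE S E)).map (εstar.app F)).app X =
        F.obj.map (ε.app X) := fun F X => rfl
  have hεWt : ∀ F : ObjectProperty.FullSubcategory (SendsSE S E), WtildeProp S W E (εstar.app F) := by
    intro F M hM
    rw [εs_app]
    exact keyE F (ε.app M) (hcof M) hM (hε M)
  have hεRstarSt : ∀ F : ObjectProperty.FullSubcategory (SendsSE S E),
      StildeProp S E (εstar.app (Rstar.obj F)) := by
    intro F X
    show E (F.obj.map (R.map (ε.app X)))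
    exact keyE F (R.map (ε.app X)) (hcof _) (hcof _) (satW_Rmap _ (hε X))
  have hRstarWt : ∀ {F G : ObjectProperty.FullSubcategory (SendsSE S E)} (φ : F ⟶ G),
      WtildeProp S W E φ → StildeProp S E (Rstar.map φ) := by
    intro F G φ hφ X
    exact hφ (R.obj X) (hcof X)
  -- localization machinery for Stilde
  let St := StildeProp S E
  let Q := St.Q
  have hRQ : St.IsInvertedBy (Rstar ⋙ Q) := by
    intro F G φ hφ
    have : IsIso (Q.map (Rstar.map φ)) :=
      Localization.inverts Q St _ (fun X => hφ (R.obj X))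
    exact this
  let Rbar : St.Localization ⥤ St.Localization := Localization.lift (Rstar ⋙ Q) hRQ Q
  let η : Rbar ⟶ 𝟭 St.Localization :=
    Localization.liftNatTrans Q St (Rstar ⋙ Q) Q Rbar (𝟭 St.Localization)
      (Functor.whiskerRight εstar Q ≫ (Functor.leftUnitor Q).hom)
  have hηapp : ∀ F : ObjectProperty.FullSubcategory (SendsSE S E),
      IsIso (Q.map (εstar.app F)) → IsIso (η.app (Q.obj F)) := by
    intro F h
    rw [show η = Localization.liftNatTrans Q St (Rstar ⋙ Q) Q Rbar (𝟭 St.Localization)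
      (Functor.whiskerRight εstar Q ≫ (Functor.leftUnitor Q).hom) from rfl,
      Localization.liftNatTrans_app]
    haveI h' : IsIso (Q.map (εs F)) := h
    simp only [NatTrans.comp_app, Functor.whiskerRight_app, Functor.leftUnitor_hom_app,
      Category.comp_id]
    haveI i1 : IsIso ((Localization.Lifting.iso Q St (Rstar ⋙ Q) Rbar).hom.app F) := by
      infer_instance
    haveI i2 : IsIso ((Localization.Lifting.iso Q St Q (𝟭 St.Localization)).inv.app F) := by
      infer_instance
    haveI i3 : IsIso (Q.map (εs F) ≫ 𝟙 (Q.obj F)) := by infer_instance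
    infer_instance
  have hTmap : ∀ {F G : ObjectProperty.FullSubcategory (SendsSE S E)} (ψ : F ⟶ G),
      StildeProp S E (Rstar.map ψ) → IsIso (Rbar.map (Q.map ψ)) := by
    intro F G ψ h
    haveI h2 : IsIso (Q.map (Rstar.map ψ)) := Localization.inverts Q St _ h
    have hnat : Rbar.map (Q.map ψ) ≫
        (Localization.Lifting.iso Q St (Rstar ⋙ Q) Rbar).hom.app G =
        (Localization.Lifting.iso Q St (Rstar ⋙ Q) Rbar).hom.app F ≫
          Q.map (Rstar.map ψ) :=
      (Localization.Lifting.iso Q St (Rstar ⋙ Q) Rbar).hom.naturality ψ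
    haveI : IsIso (Rbar.map (Q.map ψ) ≫
        (Localization.Lifting.iso Q St (Rstar ⋙ Q) Rbar).hom.app G) := by
      rw [hnat]; infer_instance
    exact IsIso.of_isIso_comp_right (Rbar.map (Q.map ψ))
      ((Localization.Lifting.iso Q St (Rstar ⋙ Q) Rbar).hom.app G)
  -- cofibrancy criterion
  have cof_of : ∀ F : ObjectProperty.FullSubcategory (SendsSE S E), IsIso (Q.map (εstar.app F)) →
      Cofibrant (StildeProp S E) (WtildeProp S W E) F := by
    intro F hQF G H ψ hψ
    haveI := hηapp F hQF
    haveI := hTmap ψ (hRstarWt ψ hψ)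
    exact bij_of_natTrans Rbar η (Q.map ψ)
  have cofRstar : ∀ F : ObjectProperty.FullSubcategory (SendsSE S E),
      Cofibrant (StildeProp S E) (WtildeProp S W E) (Rstar.obj F) :=
    fun F => cof_of _ (Localization.inverts Q St _ (hεRstarSt F))
  -- cofibrant implies F(W) ⊆ E
  have cof_to_W : ∀ F : ObjectProperty.FullSubcategory (SendsSE S E),
      Cofibrant (StildeProp S E) (WtildeProp S W E) F →
      ∀ ⦃X Y : C⦄ (w : X ⟶ Y), W w → E (F.obj.map w) := by
    intro F hFcof X Y w hw
    -- `Q.map (εstar.app F)` is an isomorphism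
    haveI hQiso : IsIso (Q.map (εstar.app F)) :=
      isIso_of_bij _ (hFcof (εstar.app F) (hεWt F)).2
        (cofRstar F (εstar.app F) (hεWt F)).1
    -- evaluation at each object inverts Stilde, hence `E.Q.map (F.map (ε Z))` is iso
    have hEiso : ∀ Z : C, IsIso (E.Q.map (F.obj.map (ε.app Z))) := by
      intro Z
      let G : ObjectProperty.FullSubcategory (SendsSE S E) ⥤ E.Localization :=
        ObjectProperty.ι (SendsSE S E) ⋙ (evaluation C D).obj Z ⋙ E.Q
      have hG : St.IsInvertedBy G := fun _ _ φ hφ => (hE _).1 (hφ Z)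
      exact inverted_of_satW St G hG (εstar.app F) hQiso
    have hR : IsIso (E.Q.map (F.obj.map (R.map w))) := by
      have hWw : IsIso (W.Q.map w) := Localization.inverts W.Q W w hw
      exact (hE _).1 (keyE F (R.map w) (hcof X) (hcof Y) (satW_Rmap w hWw))
    have hcomm : F.obj.map (R.map w) ≫ F.obj.map (ε.app Y) =
        F.obj.map (ε.app X) ≫ F.obj.map w := by
      rw [← F.obj.map_comp, ← F.obj.map_comp]
      congr 1
      simpa using ε.naturality w
    apply (hE _).2
    have h3 := congrArg E.Q.map hcomm
    rw [E.Q.map_comp, E.Q.map_comp] at h3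
    haveI := hEiso X; haveI := hEiso Y
    have h4 : E.Q.map (F.obj.map w) =
        inv (E.Q.map (F.obj.map (ε.app X))) ≫
          E.Q.map (F.obj.map (R.map w)) ≫ E.Q.map (F.obj.map (ε.app Y)) := by
      rw [h3]; simp
    rw [h4]
    infer_instance
  refine ⟨Rstar, εstar, rfl, ?_, cofRstar, ?_, ?_, ?_⟩
  · intro F X
    rw [εs_app]
    have : eqToHom (Functor.congr_obj (Functor.congr_obj
        (rfl : Rstar ⋙ ObjectProperty.ι (SendsSE S E) =
          ObjectProperty.ι (SendsSE S E) ⋙ (Functor.whiskeringLeft C C D).obj R) F) X) =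
        𝟙 _ := eqToHom_refl _ _
    rw [this, Category.id_comp]
  · intro F
    exact Localization.inverts (WtildeProp S W E).Q (WtildeProp S W E) _ (hεWt F)
  · intro F
    exact ⟨Rstar.obj F, εstar.app F, cofRstar F,
      Localization.inverts (WtildeProp S W E).Q (WtildeProp S W E) _ (hεWt F)⟩
  · intro F
    constructor
    · exact cof_to_W F
    · intro hFW
      apply cof_of
      apply Localization.inverts Q St
      intro X
      rw [εs_app]
      exact sendsSatW W E hE hFW (ε.app X) (hε X)
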